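/- There is a constant c > 0 such that for every locally integrable f on ℝⁿ and every cube Q, (1/|Q|) ∫_Q Mf(y) dy ≤ c sup_{Q' ⊇ Q} ‖f‖_{L(1+log⁺L),Q'}, where the supremum is over all cubes Q' containing Q. -/

import Mathlib

open MeasureTheory ENNReal Set

noncomputable section

/-- `ℝⁿ` with the Euclidean metric. -/
abbrev Rn (n : ℕ) : Type := EuclideanSpace ℝ (Fin n)

/-- The axis-parallel cube with center `c` and side length `h`. -/
def zCube {n : ℕ} (c : Rn n) (h : ℝ) : Set (Rn n) := {x | ∀ i, |x i - c i| ≤ h / 2}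

/-- `log⁺ t = max (log t) 0`. -/
def logPlus (t : ℝ) : ℝ := max (Real.log t) 0

/-- The Hardy–Littlewood maximal operator of an `ℝ≥0∞`-valued function:
`sup_{Q ∋ x} |Q|⁻¹ ∫_Q g`, the supremum over all axis-parallel cubes containing `x`. -/
def maxE {n : ℕ} (g : Rn n → ℝ≥0∞) (x : Rn n) : ℝ≥0∞ :=
  ⨆ (c : Rn n) (h : ℝ) (_ : 0 < h) (_ : x ∈ zCube c h),
    (ENNReal.ofReal (h ^ n))⁻¹ * ∫⁻ y in zCube c h, g y

/-- The Hardy–Littlewood maximal operator of a real function. -/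
def HLM {n : ℕ} (f : Rn n → ℝ) (x : Rn n) : ℝ≥0∞ :=
  maxE (fun y => ENNReal.ofReal |f y|) x

/-- The fractional maximal operator `M_α` applied to an `ℝ≥0∞`-valued function:
`sup_{Q ∋ x} |Q|^{(α-n)/n} ∫_Q g`. -/
def fracMaxE {n : ℕ} (α : ℝ) (g : Rn n → ℝ≥0∞) (x : Rn n) : ℝ≥0∞ :=
  ⨆ (c : Rn n) (h : ℝ) (_ : 0 < h) (_ : x ∈ zCube c h),
    ENNReal.ofReal (h ^ (α - (n : ℝ))) * ∫⁻ y in zCube c h, g y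

/-- The maximal commutator `C_b(f)(x) = sup_{Q ∋ x} |Q|⁻¹ ∫_Q |b x - b y| |f y| dy`. -/
def maxComm {n : ℕ} (b f : Rn n → ℝ) (x : Rn n) : ℝ≥0∞ :=
  ⨆ (c : Rn n) (h : ℝ) (_ : 0 < h) (_ : x ∈ zCube c h),
    (ENNReal.ofReal (h ^ n))⁻¹ * ∫⁻ y in zCube c h, ENNReal.ofReal (|b x - b y| * |f y|)

/-- The mean value `f_Q = |Q|⁻¹ ∫_Q f` of `f` over the cube with center `c`, side `h`. -/
def cubeMean {n : ℕ} (f : Rn n → ℝ) (c : Rn n) (h : ℝ) : ℝ :=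
  (h ^ n)⁻¹ * ∫ y in zCube c h, f y

/-- The mean oscillation `|Q|⁻¹ ∫_Q |b - b_Q|` of `b` over a cube. -/
def oscAvg {n : ℕ} (b : Rn n → ℝ) (c : Rn n) (h : ℝ) : ℝ≥0∞ :=
  (ENNReal.ofReal (h ^ n))⁻¹ * ∫⁻ y in zCube c h, ENNReal.ofReal |b y - cubeMean b c h|

/-- The BMO seminorm `‖b‖_* = sup_Q |Q|⁻¹ ∫_Q |b - b_Q|`. -/
def bmoNorm {n : ℕ} (b : Rn n → ℝ) : ℝ≥0∞ :=
  ⨆ (c : Rn n) (h : ℝ) (_ : 0 < h), oscAvg b c h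

/-- Morrey norm `‖g‖_{M_{p,λ}} = sup_{x, r>0} r^{(λ-n)/p} (∫_{B(x,r)} g^p)^{1/p}`
for an `ℝ≥0∞`-valued function. -/
def morreyE {n : ℕ} (p lam : ℝ) (g : Rn n → ℝ≥0∞) : ℝ≥0∞ :=
  ⨆ (x : Rn n) (r : ℝ) (_ : 0 < r),
    ENNReal.ofReal (r ^ ((lam - n) / p)) * (∫⁻ y in Metric.ball x r, g y ^ p) ^ (1 / p)

/-- Morrey norm of a real function. -/
def morrey {n : ℕ} (p lam : ℝ) (f : Rn n → ℝ) : ℝ≥0∞ :=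
  morreyE p lam (fun y => ENNReal.ofReal |f y|)

/-- The Zygmund function `Φ(t) = t (1 + log⁺ t)`, extended to `ℝ≥0∞`. -/
def zygFnE (t : ℝ≥0∞) : ℝ≥0∞ := t * (1 + ENNReal.ofReal (logPlus t.toReal))

/-- The Luxemburg-type `L(1+log⁺L)`-average of `g` over a cube:
`inf {α > 0 : |Q|⁻¹ ∫_Q Φ(g/α) ≤ 1}` (as an element of `ℝ≥0∞`, `= ∞` if no such `α`). -/
def zygAvgE {n : ℕ} (g : Rn n → ℝ≥0∞) (c : Rn n) (h : ℝ) : ℝ≥0∞ :=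
  sInf {a : ℝ≥0∞ | ∃ α : ℝ, 0 < α ∧ a = ENNReal.ofReal α ∧
    (ENNReal.ofReal (h ^ n))⁻¹ * ∫⁻ y in zCube c h, zygFnE (g y / ENNReal.ofReal α) ≤ 1}

/-- The `L(1+log⁺L)`-average of a real function over a cube. -/
def zygAvg {n : ℕ} (f : Rn n → ℝ) (c : Rn n) (h : ℝ) : ℝ≥0∞ :=
  zygAvgE (fun y => ENNReal.ofReal |f y|) c h

/-- The weak `L(1+log⁺L)`-average of `g` over a cube:
`inf {α > 0 : ∀ t > 0, |Q|⁻¹ |{x ∈ Q : g x > α t}| ≤ (1/t)(1 + log⁺(1/t))}`. -/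
def weakZygAvgE {n : ℕ} (g : Rn n → ℝ≥0∞) (c : Rn n) (h : ℝ) : ℝ≥0∞ :=
  sInf {a : ℝ≥0∞ | ∃ α : ℝ, 0 < α ∧ a = ENNReal.ofReal α ∧ ∀ t : ℝ, 0 < t →
    (ENNReal.ofReal (h ^ n))⁻¹ * volume {x ∈ zCube c h | ENNReal.ofReal (α * t) < g x}
      ≤ ENNReal.ofReal ((1 / t) * (1 + logPlus (1 / t)))}

/-- The Zygmund–Morrey norm `sup_Q |Q|^{λ/n} ‖g‖_{L(1+log⁺L),Q}` of an `ℝ≥0∞`-valued function. -/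
def zygMorreyE {n : ℕ} (lam : ℝ) (g : Rn n → ℝ≥0∞) : ℝ≥0∞ :=
  ⨆ (c : Rn n) (h : ℝ) (_ : 0 < h), ENNReal.ofReal (h ^ lam) * zygAvgE g c h

/-- The Zygmund–Morrey norm of a real function. -/
def zygMorrey {n : ℕ} (lam : ℝ) (f : Rn n → ℝ) : ℝ≥0∞ :=
  zygMorreyE lam (fun y => ENNReal.ofReal |f y|)

/-- The weak Zygmund–Morrey norm `sup_Q |Q|^{λ/n} ‖g‖_{WL(1+log⁺L),Q}`. -/
def weakZygMorreyE {n : ℕ} (lam : ℝ) (g : Rn n → ℝ≥0∞) : ℝ≥0∞ :=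
  ⨆ (c : Rn n) (h : ℝ) (_ : 0 < h), ENNReal.ofReal (h ^ lam) * weakZygAvgE g c h

/-- The commutator `[M,b]f(x) = M(bf)(x) - b(x) Mf(x)`. -/
def commMb {n : ℕ} (b f : Rn n → ℝ) (x : Rn n) : ℝ :=
  (HLM (fun y => b y * f y) x).toReal - b x * (HLM f x).toReal

/-- `f` is radially decreasing: `f x = φ ‖x‖` with `φ` nonnegative and
nonincreasing on `(0,∞)`, measurable. -/
def RadDec {n : ℕ} (f : Rn n → ℝ) : Prop :=
  ∃ φ : ℝ → ℝ, Measurable φ ∧ (∀ r : ℝ, 0 < r → 0 ≤ φ r) ∧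
    AntitoneOn φ (Set.Ioi 0) ∧ ∀ x, f x = φ ‖x‖

/-- `∫_Q |f| (1 + log⁺(|f| / |f|_Q))`. -/
def zygInt {n : ℕ} (f : Rn n → ℝ) (c : Rn n) (h : ℝ) : ℝ≥0∞ :=
  ∫⁻ y in zCube c h,
    ENNReal.ofReal (|f y| * (1 + logPlus (|f y| / cubeMean (fun z => |f z|) c h)))

/-- `∫_0^t φ(ρ) ρ^{n-1} dρ`. -/
def radInt1 (n : ℕ) (φ : ℝ → ℝ) (t : ℝ) : ℝ≥0∞ :=
  ∫⁻ ρ in Set.Ioc (0 : ℝ) t, ENNReal.ofReal (φ ρ * ρ ^ (n - 1))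

/-- `∫_0^x (1/t) ∫_0^t φ(ρ) ρ^{n-1} dρ dt`. -/
def radInt2 (n : ℕ) (φ : ℝ → ℝ) (x : ℝ) : ℝ≥0∞ :=
  ∫⁻ t in Set.Ioc (0 : ℝ) x, (ENNReal.ofReal t)⁻¹ * radInt1 n φ t

/-- `∫_0^x (1/y) ∫_0^y (1/t) ∫_0^t φ(ρ) ρ^{n-1} dρ dt dy`. -/
def radInt3 (n : ℕ) (φ : ℝ → ℝ) (x : ℝ) : ℝ≥0∞ :=
  ∫⁻ y in Set.Ioc (0 : ℝ) x, (ENNReal.ofReal y)⁻¹ * radInt2 n φ y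

/-- `sup_{x>0} x^{λ-n} ∫_0^x (1/t) ∫_0^t φ(ρ) ρ^{n-1} dρ dt`. -/
def radSup2 (n : ℕ) (lam : ℝ) (φ : ℝ → ℝ) : ℝ≥0∞ :=
  ⨆ (x : ℝ) (_ : 0 < x), ENNReal.ofReal (x ^ (lam - (n : ℝ))) * radInt2 n φ x

/-- `sup_{x>0} x^{λ-n} ∫_0^x (1/y) ∫_0^y (1/t) ∫_0^t φ(ρ) ρ^{n-1} dρ dt dy`. -/
def radSup3 (n : ℕ) (lam : ℝ) (φ : ℝ → ℝ) : ℝ≥0∞ :=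
  ⨆ (x : ℝ) (_ : 0 < x), ENNReal.ofReal (x ^ (lam - (n : ℝ))) * radInt3 n φ x



-- ===== auxiliary lemmas =====

lemma measurable_coord {n : ℕ} (i : Fin n) : Measurable (fun x : Rn n => x i) :=
  (EuclideanSpace.proj (𝕜 := ℝ) i).continuous.measurable

lemma measurableSet_zCube {n : ℕ} (c : Rn n) (h : ℝ) : MeasurableSet (zCube c h) := by
  have : zCube c h = ⋂ i, {x : Rn n | |x i - c i| ≤ h / 2} := by
    ext x; simp [zCube, Set.mem_iInter]
  rw [this]
  exact MeasurableSet.iInter fun i =>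
    measurableSet_le (((measurable_coord i).sub measurable_const).abs) measurable_const

lemma zCube_eq_preimage {n : ℕ} (c : Rn n) (h : ℝ) :
    zCube c h = (MeasurableEquiv.toLp 2 (Fin n → ℝ)).symm ⁻¹'
      (Set.univ.pi fun i => Icc (c i - h / 2) (c i + h / 2)) := by
  ext x
  have hxx : ∀ i, (MeasurableEquiv.toLp 2 (Fin n → ℝ)).symm x i = x i := fun i => rfl
  simp only [zCube, mem_setOf_eq, mem_preimage, Set.mem_pi, mem_univ, forall_true_left,
    mem_Icc, hxx]
  constructor
  · intro hx i; have := hx i; rw [abs_le] at this; constructor <;> linarith [this.1, this.2]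
  · intro hx i; rw [abs_le]; have := hx i; constructor <;> linarith [this.1, this.2]

lemma volume_zCube {n : ℕ} (c : Rn n) {h : ℝ} (hh : 0 ≤ h) :
    volume (zCube c h) = ENNReal.ofReal (h ^ n) := by
  rw [zCube_eq_preimage]
  rw [(EuclideanSpace.volume_preserving_symm_measurableEquiv_toLp (Fin n)).measure_preimage
    (MeasurableSet.univ_pi fun i => measurableSet_Icc).nullMeasurableSet]
  rw [volume_pi_pi]
  simp only [Real.volume_Icc]
  have : ∀ i : Fin n, ENNReal.ofReal (c i + h/2 - (c i - h/2)) = ENNReal.ofReal h := by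
    intro i; congr 1; ring
  rw [Finset.prod_congr rfl (fun i _ => this i), Finset.prod_const, ← ENNReal.ofReal_pow hh]
  simp

lemma zCube_subset_closedBall {n : ℕ} (c : Rn n) {h : ℝ} (hh : 0 ≤ h) :
    zCube c h ⊆ Metric.closedBall c (Real.sqrt n * h / 2) := by
  intro x hx
  rw [Metric.mem_closedBall, EuclideanSpace.dist_eq]
  have key : ∑ i, dist (x i) (c i) ^ 2 ≤ (n : ℝ) * (h / 2) ^ 2 := by
    calc ∑ i, dist (x i) (c i) ^ 2 ≤ ∑ _i : Fin n, (h / 2) ^ 2 := by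
          apply Finset.sum_le_sum; intro i _
          have := hx i
          have h1 : dist (x i) (c i) = |x i - c i| := Real.dist_eq _ _
          rw [h1]; exact pow_le_pow_left₀ (abs_nonneg _) this 2
      _ = (n : ℝ) * (h / 2) ^ 2 := by simp [Finset.sum_const, mul_comm]
  calc Real.sqrt (∑ i, dist (x i) (c i) ^ 2) ≤ Real.sqrt ((n : ℝ) * (h / 2) ^ 2) :=
        Real.sqrt_le_sqrt key
    _ = Real.sqrt n * (h / 2) := by
        rw [Real.sqrt_mul (Nat.cast_nonneg n), Real.sqrt_sq (by linarith)]
    _ = Real.sqrt n * h / 2 := by ring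

lemma closedBall_subset_zCube {n : ℕ} (c : Rn n) {r : ℝ} :
    Metric.closedBall c r ⊆ zCube c (2 * r) := by
  intro x hx i
  rw [Metric.mem_closedBall, EuclideanSpace.dist_eq] at hx
  have h1 : |x i - c i| = dist (x i) (c i) := (Real.dist_eq _ _).symm
  rw [h1]
  have h2 : dist (x i) (c i) = Real.sqrt (dist (x i) (c i) ^ 2) :=
    (Real.sqrt_sq dist_nonneg).symm
  rw [h2]
  calc Real.sqrt (dist (x i) (c i) ^ 2) ≤ Real.sqrt (∑ j, dist (x j) (c j) ^ 2) := by
        apply Real.sqrt_le_sqrt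
        exact Finset.single_le_sum (f := fun j => dist (x j) (c j) ^ 2)
          (fun j _ => sq_nonneg _) (Finset.mem_univ i)
    _ ≤ r := hx
    _ = 2 * r / 2 := by ring

/-- maximal operator over cubes with rational data -/
def Mrat {n : ℕ} (g : Rn n → ℝ≥0∞) (x : Rn n) : ℝ≥0∞ :=
  ⨆ (p : (Fin n → ℚ) × ℚ) (_ : 0 < ((p.2 : ℝ))) (_ : x ∈ zCube (WithLp.toLp 2 fun i => (p.1 i : ℝ)) p.2),
    (ENNReal.ofReal (((p.2 : ℝ)) ^ n))⁻¹ * ∫⁻ y in zCube (WithLp.toLp 2 fun i => (p.1 i : ℝ)) (p.2 : ℝ), g y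

lemma measurable_Mrat {n : ℕ} (g : Rn n → ℝ≥0∞) : Measurable (Mrat g) := by
  apply Measurable.iSup
  intro p
  by_cases hp : 0 < ((p.2 : ℝ))
  · have : (fun x : Rn n => ⨆ (_ : 0 < ((p.2 : ℝ)))
        (_ : x ∈ zCube (WithLp.toLp 2 fun i => (p.1 i : ℝ)) p.2),
        (ENNReal.ofReal (((p.2 : ℝ)) ^ n))⁻¹ *
          ∫⁻ y in zCube (WithLp.toLp 2 fun i => (p.1 i : ℝ)) (p.2 : ℝ), g y) =
        (zCube (WithLp.toLp 2 fun i => (p.1 i : ℝ)) (p.2 : ℝ)).indicator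
          (fun _ => (ENNReal.ofReal (((p.2 : ℝ)) ^ n))⁻¹ *
            ∫⁻ y in zCube (WithLp.toLp 2 fun i => (p.1 i : ℝ)) (p.2 : ℝ), g y) := by
      ext x
      by_cases hx : x ∈ zCube (WithLp.toLp 2 fun i => (p.1 i : ℝ)) (p.2 : ℝ) <;>
        simp [hp, hx]
    rw [this]
    exact Measurable.indicator measurable_const (measurableSet_zCube _ _)
  · have : (fun x : Rn n => ⨆ (_ : 0 < ((p.2 : ℝ)))
        (_ : x ∈ zCube (WithLp.toLp 2 fun i => (p.1 i : ℝ)) p.2),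
        (ENNReal.ofReal (((p.2 : ℝ)) ^ n))⁻¹ *
          ∫⁻ y in zCube (WithLp.toLp 2 fun i => (p.1 i : ℝ)) (p.2 : ℝ), g y) = fun _ => 0 := by
      ext x; simp [hp]
    rw [this]; exact measurable_const

lemma Mrat_le_maxE {n : ℕ} (g : Rn n → ℝ≥0∞) (x : Rn n) : Mrat g x ≤ maxE g x := by
  apply iSup_le; intro p
  apply iSup_le; intro hp
  apply iSup_le; intro hx
  exact le_iSup_of_le (WithLp.toLp 2 fun i => (p.1 i : ℝ)) (le_iSup_of_le (p.2 : ℝ)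
    (le_iSup_of_le hp (le_iSup_of_le hx le_rfl)))

lemma inv_pow_le_aux {s q k : ℝ} (hs : 0 < s) (hq : s < q) (hqk : q ≤ k * s) (hk : 0 < k)
    (n : ℕ) :
    (ENNReal.ofReal (s ^ n))⁻¹ ≤ ENNReal.ofReal (k ^ n) * (ENNReal.ofReal (q ^ n))⁻¹ := by
  have hq0 : 0 < q := hs.trans hq
  have h1 : q ^ n ≤ k ^ n * s ^ n := by
    rw [← mul_pow]; exact pow_le_pow_left₀ hq0.le hqk n
  rw [← ENNReal.ofReal_inv_of_pos (pow_pos hs n), ← ENNReal.ofReal_inv_of_pos (pow_pos hq0 n),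
    ← ENNReal.ofReal_mul (by positivity)]
  apply ENNReal.ofReal_le_ofReal
  rw [inv_le_iff_one_le_mul₀ (pow_pos hs n)]
  calc (1:ℝ) = (q^n) * (q^n)⁻¹ := (mul_inv_cancel₀ (pow_pos hq0 n).ne').symm
    _ ≤ (k ^ n * s ^ n) * (q^n)⁻¹ := mul_le_mul_of_nonneg_right h1 (by positivity)
    _ = k ^ n * (q ^ n)⁻¹ * s ^ n := by ring

lemma maxE_le_Mrat {n : ℕ} (g : Rn n → ℝ≥0∞) (x : Rn n) :
    maxE g x ≤ ENNReal.ofReal (2 ^ n) * Mrat g x := by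
  apply iSup_le; intro c
  apply iSup_le; intro s
  apply iSup_le; intro hs
  apply iSup_le; intro hx
  -- choose rational q ∈ (s, 2s)
  obtain ⟨q, hq1, hq2⟩ := exists_rat_btwn (by linarith : s < 2 * s)
  -- choose rational center
  have hc : ∀ i : Fin n, ∃ a : ℚ, c i - ((q:ℝ) - s)/2 < (a:ℝ) ∧ (a:ℝ) < c i + ((q:ℝ)-s)/2 := by
    intro i
    exact_mod_cast exists_rat_btwn (by linarith : c i - ((q:ℝ) - s)/2 < c i + ((q:ℝ)-s)/2)
  choose a ha1 ha2 using hc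
  have hsub : zCube c s ⊆ zCube (WithLp.toLp 2 fun i => (a i : ℝ)) (q : ℝ) := by
    intro z hz i
    have h1 := hz i
    have h2 : |c i - (a i : ℝ)| ≤ ((q:ℝ) - s)/2 := by
      rw [abs_le]; constructor <;> [linarith [ha2 i]; linarith [ha1 i]]
    calc |z i - (a i : ℝ)| = |(z i - c i) + (c i - (a i:ℝ))| := by ring_nf
      _ ≤ |z i - c i| + |c i - (a i:ℝ)| := abs_add_le _ _
      _ ≤ s/2 + ((q:ℝ) - s)/2 := add_le_add h1 h2
      _ = (q:ℝ)/2 := by ring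
  have hq0 : 0 < ((q:ℝ)) := by linarith
  calc (ENNReal.ofReal (s ^ n))⁻¹ * ∫⁻ y in zCube c s, g y
      ≤ (ENNReal.ofReal (2 ^ n) * (ENNReal.ofReal (((q:ℝ)) ^ n))⁻¹) *
        ∫⁻ y in zCube (WithLp.toLp 2 fun i => (a i : ℝ)) (q : ℝ), g y := by
        apply mul_le_mul'
        · exact inv_pow_le_aux hs hq1 hq2.le two_pos n
        · exact lintegral_mono_set hsub
    _ = ENNReal.ofReal (2 ^ n) * ((ENNReal.ofReal (((q:ℝ)) ^ n))⁻¹ *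
        ∫⁻ y in zCube (WithLp.toLp 2 fun i => (a i : ℝ)) (q : ℝ), g y) := by ring
    _ ≤ ENNReal.ofReal (2 ^ n) * Mrat g x := by
        apply mul_le_mul_right
        exact le_iSup_of_le (a, q) (le_iSup_of_le hq0 (le_iSup_of_le (hsub hx) le_rfl))

/-- Layer cake for `ℝ≥0∞`-valued measurable functions. -/
lemma layercake_ennreal {α : Type*} [MeasurableSpace α] (μ : Measure α) [SFinite μ]
    {T : α → ℝ≥0∞} (hT : Measurable T) :
    ∫⁻ y, T y ∂μ = ∫⁻ t in Ioi (0:ℝ), μ {y | ENNReal.ofReal t < T y} := by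
  set S : Set (α × ℝ) := {p | ENNReal.ofReal p.2 < T p.1} with hSdef
  have hS : MeasurableSet S :=
    measurableSet_lt (ENNReal.measurable_ofReal.comp measurable_snd) (hT.comp measurable_fst)
  set F : α → ℝ → ℝ≥0∞ := fun y t => S.indicator (fun _ => 1) (y, t) with hFdef
  have key : ∀ y, T y = ∫⁻ t in Ioi (0:ℝ), F y t := by
    intro y
    have h1 : ∀ t : ℝ, F y t =
        ({t : ℝ | ENNReal.ofReal t < T y}.indicator (fun _ => (1:ℝ≥0∞)) t) := by
      intro t
      by_cases ht : ENNReal.ofReal t < T y <;>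
        simp [hFdef, hSdef, Set.indicator_apply, ht]
    simp_rw [h1]
    rw [lintegral_indicator_const₀
      (measurableSet_lt ENNReal.measurable_ofReal measurable_const).nullMeasurableSet, one_mul,
      Measure.restrict_apply₀' measurableSet_Ioi.nullMeasurableSet]
    rcases eq_or_ne (T y) ∞ with hTy | hTy
    · have : {t : ℝ | ENNReal.ofReal t < T y} ∩ Ioi 0 = Ioi 0 := by
        ext t; simp [hTy, ENNReal.ofReal_lt_top]
      rw [this, hTy]; simp [Real.volume_Ioi]
    · have : {t : ℝ | ENNReal.ofReal t < T y} ∩ Ioi 0 = Ioo 0 ((T y).toReal) := by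
        ext t
        simp only [mem_inter_iff, mem_setOf_eq, mem_Ioi, mem_Ioo]
        constructor
        · rintro ⟨h1, h2⟩
          exact ⟨h2, (ENNReal.ofReal_lt_iff_lt_toReal h2.le hTy).mp h1⟩
        · rintro ⟨h1, h2⟩
          exact ⟨(ENNReal.ofReal_lt_iff_lt_toReal h1.le hTy).mpr h2, h1⟩
      rw [this, Real.volume_Ioo, sub_zero, ENNReal.ofReal_toReal hTy]
  have hunc : AEMeasurable (Function.uncurry F) (μ.prod (volume.restrict (Ioi (0:ℝ)))) := by
    have : Function.uncurry F = S.indicator (fun _ => 1) := rfl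
    rw [this]
    exact (measurable_const.indicator hS).aemeasurable
  calc ∫⁻ y, T y ∂μ
      = ∫⁻ y, (∫⁻ t in Ioi (0:ℝ), F y t) ∂μ := lintegral_congr key
    _ = ∫⁻ t in Ioi (0:ℝ), (∫⁻ y, F y t ∂μ) := lintegral_lintegral_swap hunc
    _ = ∫⁻ t in Ioi (0:ℝ), μ {y | ENNReal.ofReal t < T y} := by
        apply lintegral_congr; intro t
        have h1 : ∀ y, F y t = ({y : α | ENNReal.ofReal t < T y}.indicator
            (fun _ => (1:ℝ≥0∞)) y) := by
          intro y; by_cases hy : ENNReal.ofReal t < T y <;>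
            simp [hFdef, hSdef, Set.indicator_apply, hy]
        simp_rw [h1]
        rw [lintegral_indicator_const
          (show MeasurableSet {y | ENNReal.ofReal t < T y} from hT measurableSet_Ioi), one_mul]

/-- Weak type (1,1) for the cube maximal operator -/
lemma weak_type_maxE {n : ℕ} (hn : 0 < n) {G : Rn n → ℝ≥0∞} (hG : Measurable G)
    {t : ℝ} (ht : 0 < t) :
    volume {y | ENNReal.ofReal t < maxE G y} ≤
      ENNReal.ofReal ((4 * Real.sqrt n) ^ n) * (ENNReal.ofReal t)⁻¹ * ∫⁻ y, G y := by
  have hsqrt : (0:ℝ) < Real.sqrt n := Real.sqrt_pos.mpr (Nat.cast_pos.mpr hn)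
  have hC0 : (0:ℝ) < (4 * Real.sqrt n) ^ n := by positivity
  have htne : ENNReal.ofReal t ≠ 0 := (ENNReal.ofReal_pos.mpr ht).ne'
  set I := ∫⁻ y, G y with hIdef
  rcases eq_or_ne I ∞ with hI | hI
  · rw [hI, ENNReal.mul_top]
    · exact le_top
    · exact mul_ne_zero (ENNReal.ofReal_pos.mpr hC0).ne'
        (ENNReal.inv_ne_zero.mpr ENNReal.ofReal_ne_top)
  set E := {y | ENNReal.ofReal t < maxE G y} with hEdef
  have hy : ∀ y : E, ∃ c : Rn n, ∃ s : ℝ, 0 < s ∧ (y : Rn n) ∈ zCube c s ∧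
      ENNReal.ofReal t < (ENNReal.ofReal (s ^ n))⁻¹ * ∫⁻ z in zCube c s, G z := by
    rintro ⟨y, hy⟩
    have : ENNReal.ofReal t < maxE G y := hy
    simp only [maxE, lt_iSup_iff] at this
    obtain ⟨c, s, hs, hmem, hlt⟩ := this
    exact ⟨c, s, hs, hmem, hlt⟩
  choose cc ss hs hmem hlt using hy
  -- basic bound
  have bound1 : ∀ y : E, ENNReal.ofReal (ss y ^ n) * ENNReal.ofReal t ≤
      ∫⁻ z in zCube (cc y) (ss y), G z := by
    intro y
    have hsn : ENNReal.ofReal (ss y ^ n) ≠ 0 := (ENNReal.ofReal_pos.mpr (pow_pos (hs y) n)).ne'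
    calc ENNReal.ofReal (ss y ^ n) * ENNReal.ofReal t
        ≤ ENNReal.ofReal (ss y ^ n) *
          ((ENNReal.ofReal (ss y ^ n))⁻¹ * ∫⁻ z in zCube (cc y) (ss y), G z) :=
          mul_le_mul_right (hlt y).le _
      _ = _ := by
          rw [← mul_assoc, ENNReal.mul_inv_cancel hsn ENNReal.ofReal_ne_top, one_mul]
  have bound2 : ∀ y : E, ENNReal.ofReal (ss y ^ n) ≤
      (ENNReal.ofReal t)⁻¹ * ∫⁻ z in zCube (cc y) (ss y), G z := by
    intro y
    calc ENNReal.ofReal (ss y ^ n)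
        = ENNReal.ofReal (ss y ^ n) * ENNReal.ofReal t * (ENNReal.ofReal t)⁻¹ := by
          rw [mul_assoc, ENNReal.mul_inv_cancel htne ENNReal.ofReal_ne_top, mul_one]
      _ ≤ (∫⁻ z in zCube (cc y) (ss y), G z) * (ENNReal.ofReal t)⁻¹ :=
          mul_le_mul_left (bound1 y) _
      _ = _ := mul_comm _ _
  -- uniform radius bound
  set B0 : ℝ := max 1 ((ENNReal.ofReal t)⁻¹ * I).toReal with hB0def
  have hssle : ∀ y : E, ss y ≤ B0 := by
    intro y
    have h1 : ENNReal.ofReal (ss y ^ n) ≤ (ENNReal.ofReal t)⁻¹ * I :=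
      (bound2 y).trans (mul_le_mul_right (setLIntegral_le_lintegral _ _) _)
    have hfin : (ENNReal.ofReal t)⁻¹ * I ≠ ∞ :=
      ENNReal.mul_ne_top (ENNReal.inv_ne_top.mpr htne) hI
    have h2 : ss y ^ n ≤ ((ENNReal.ofReal t)⁻¹ * I).toReal := by
      have := ENNReal.toReal_mono hfin h1
      rwa [ENNReal.toReal_ofReal (pow_nonneg (hs y).le n)] at this
    rcases le_or_gt (ss y) 1 with h | h
    · exact h.trans (le_max_left _ _)
    · have : ss y ≤ ss y ^ n := le_self_pow₀ h.le hn.ne'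
      exact le_trans (this.trans h2) (le_max_right _ _)
  set r : E → ℝ := fun y => Real.sqrt n * ss y / 2 with hrdef
  have hr_pos : ∀ y : E, 0 < r y := fun y => by
    have := hs y; simp only [hrdef]; positivity
  obtain ⟨u, -, hu_disj, hu_cover⟩ :=
    Vitali.exists_disjoint_subfamily_covering_enlargement_closedBall
      (univ : Set E) cc r (Real.sqrt n * B0 / 2)
      (fun a _ => by
        have h1 : ss a ≤ B0 := hssle a
        simp only [hrdef]
        have : Real.sqrt n * ss a ≤ Real.sqrt n * B0 :=
          mul_le_mul_of_nonneg_left h1 hsqrt.le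
        linarith)
      4 (by norm_num)
  -- countability of u
  have hu_count : u.Countable := by
    have hpos : ∀ b : u, 0 < volume (Metric.closedBall (cc b) (r b)) :=
      fun b => Metric.measure_closedBall_pos _ _ (hr_pos b)
    have hdisj : Pairwise (Function.onFun Disjoint fun b : u => Metric.closedBall (cc b) (r b)) := by
      intro i j hij
      exact hu_disj i.2 j.2 (fun hh => hij (Subtype.ext hh))
    have := MeasureTheory.Measure.countable_meas_pos_of_disjoint_iUnion
      (μ := volume) (As := fun b : u => Metric.closedBall (cc b) (r b))
      (fun b => measurableSet_closedBall) hdisj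
    have huniv : {i : u | 0 < volume (Metric.closedBall (cc i) (r i))} = univ := by
      ext b; simp [hpos b]
    rw [huniv] at this
    rw [Set.countable_univ_iff] at this
    exact Set.countable_coe_iff.mp this
  -- covering
  have hcover : E ⊆ ⋃ b ∈ u, Metric.closedBall (cc b) (4 * r b) := by
    intro y hyE
    set y' : E := ⟨y, hyE⟩
    have h1 : y ∈ Metric.closedBall (cc y') (r y') :=
      zCube_subset_closedBall (cc y') (hs y').le (hmem y')
    obtain ⟨b, hb, hsub⟩ := hu_cover y' (mem_univ _)
    exact mem_biUnion hb (hsub (Metric.closedBall_subset_closedBall (le_refl _) |>.trans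
      (fun z hz => hz) h1))
  -- measure estimate
  set ν := volume.withDensity G with hνdef
  have hterm : ∀ b : E, volume (Metric.closedBall (cc b) (4 * r b)) ≤
      ENNReal.ofReal ((4 * Real.sqrt n) ^ n) * ((ENNReal.ofReal t)⁻¹ *
        ν (zCube (cc b) (ss b))) := by
    intro b
    have h1 : volume (Metric.closedBall (cc b) (4 * r b)) ≤
        volume (zCube (cc b) (2 * (4 * r b))) :=
      measure_mono (closedBall_subset_zCube _)
    have h2 : (2 : ℝ) * (4 * r b) = (4 * Real.sqrt n) * ss b := by
      simp only [hrdef]; ring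
    rw [h2, volume_zCube _ (by have := (hs b); positivity)] at h1
    have h3 : ((4 * Real.sqrt n) * ss b) ^ n = (4 * Real.sqrt n) ^ n * ss b ^ n := mul_pow _ _ n
    rw [h3, ENNReal.ofReal_mul (by positivity)] at h1
    calc volume (Metric.closedBall (cc b) (4 * r b))
        ≤ ENNReal.ofReal ((4 * Real.sqrt n) ^ n) * ENNReal.ofReal (ss b ^ n) := h1
      _ ≤ ENNReal.ofReal ((4 * Real.sqrt n) ^ n) * ((ENNReal.ofReal t)⁻¹ *
          ν (zCube (cc b) (ss b))) := by
          apply mul_le_mul_right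
          rw [hνdef, withDensity_apply G (measurableSet_zCube _ _)]
          exact bound2 b
  have hsum : ∑' (b : u), ν (zCube (cc b) (ss b)) ≤ I := by
    have hdisj2 : u.PairwiseDisjoint (fun b : E => zCube (cc b) (ss b)) := by
      apply hu_disj.mono
      intro b
      exact (zCube_subset_closedBall (cc b) (hs b).le)
    rw [← measure_biUnion hu_count hdisj2 (fun b _ => measurableSet_zCube _ _)]
    calc ν (⋃ b ∈ u, zCube (cc b) (ss b)) ≤ ν univ := measure_mono (subset_univ _)
      _ = I := by rw [hνdef, withDensity_apply G MeasurableSet.univ, setLIntegral_univ]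
  calc volume E ≤ volume (⋃ b ∈ u, Metric.closedBall (cc b) (4 * r b)) :=
        measure_mono hcover
    _ ≤ ∑' (b : u), volume (Metric.closedBall (cc b) (4 * r b)) :=
        measure_biUnion_le _ hu_count _
    _ ≤ ∑' (b : u), ENNReal.ofReal ((4 * Real.sqrt n) ^ n) * ((ENNReal.ofReal t)⁻¹ *
          ν (zCube (cc b) (ss b))) := ENNReal.tsum_le_tsum (fun b => hterm b)
    _ = ENNReal.ofReal ((4 * Real.sqrt n) ^ n) * ((ENNReal.ofReal t)⁻¹ *
          ∑' (b : u), ν (zCube (cc b) (ss b))) := by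
        rw [ENNReal.tsum_mul_left, ENNReal.tsum_mul_left]
    _ ≤ ENNReal.ofReal ((4 * Real.sqrt n) ^ n) * ((ENNReal.ofReal t)⁻¹ * I) := by
        apply mul_le_mul_right; exact mul_le_mul_right hsum _
    _ = ENNReal.ofReal ((4 * Real.sqrt n) ^ n) * (ENNReal.ofReal t)⁻¹ * I := by
        rw [mul_assoc]

lemma Mrat_split {n : ℕ} {g : Rn n → ℝ≥0∞} (hg : Measurable g) (a : ℝ≥0∞) (x : Rn n) :
    Mrat g x ≤ Mrat ({y | a < g y}.indicator g) x + a := by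
  apply iSup_le; intro p; apply iSup_le; intro hp; apply iSup_le; intro hx
  set s : Set (Rn n) := {y | a < g y} with hsdef
  have hs : MeasurableSet s := hg measurableSet_Ioi
  set R := zCube (WithLp.toLp 2 fun i => ((p.1 i : ℝ))) ((p.2 : ℝ)) with hRdef
  have hvol : volume R = ENNReal.ofReal ((p.2:ℝ) ^ n) := volume_zCube _ (by positivity)
  have hsplit : ∫⁻ y in R, g y =
      (∫⁻ y in R, s.indicator g y) + ∫⁻ y in R, sᶜ.indicator g y := by
    rw [← lintegral_add_left (hg.indicator hs)]
    apply lintegral_congr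
    intro y
    exact (congrFun (Set.indicator_self_add_compl s g) y).symm
  have hB : ∫⁻ y in R, sᶜ.indicator g y ≤ a * ENNReal.ofReal ((p.2:ℝ) ^ n) := by
    calc ∫⁻ y in R, sᶜ.indicator g y ≤ ∫⁻ _ in R, a := by
          apply lintegral_mono; intro y
          by_cases hy : y ∈ sᶜ
          · rw [Set.indicator_of_mem hy]
            exact not_lt.mp hy
          · rw [Set.indicator_of_notMem hy]; exact zero_le
      _ = a * volume R := setLIntegral_const R a
      _ = a * ENNReal.ofReal ((p.2:ℝ) ^ n) := by rw [hvol]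
  have hqn0 : (ENNReal.ofReal ((p.2:ℝ) ^ n)) ≠ 0 := (ENNReal.ofReal_pos.mpr (by positivity)).ne'
  calc (ENNReal.ofReal ((p.2:ℝ) ^ n))⁻¹ * ∫⁻ y in R, g y
      = (ENNReal.ofReal ((p.2:ℝ) ^ n))⁻¹ * ((∫⁻ y in R, s.indicator g y) +
          ∫⁻ y in R, sᶜ.indicator g y) := by rw [hsplit]
    _ = (ENNReal.ofReal ((p.2:ℝ) ^ n))⁻¹ * (∫⁻ y in R, s.indicator g y) +
        (ENNReal.ofReal ((p.2:ℝ) ^ n))⁻¹ * ∫⁻ y in R, sᶜ.indicator g y := by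
        rw [mul_add]
    _ ≤ Mrat (s.indicator g) x + a := by
        apply add_le_add
        · exact le_iSup_of_le p (le_iSup_of_le hp (le_iSup_of_le hx le_rfl))
        · calc (ENNReal.ofReal ((p.2:ℝ) ^ n))⁻¹ * ∫⁻ y in R, sᶜ.indicator g y
              ≤ (ENNReal.ofReal ((p.2:ℝ) ^ n))⁻¹ * (a * ENNReal.ofReal ((p.2:ℝ) ^ n)) :=
              mul_le_mul_right hB _
            _ = a := by
              rw [mul_comm a, ← mul_assoc, ENNReal.inv_mul_cancel hqn0 ENNReal.ofReal_ne_top,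
                one_mul]

lemma lint_two_div {a b : ℝ} (ha : 0 < a) (hab : a ≤ b) :
    ∫⁻ t in Ioc a b, ENNReal.ofReal (2 / t) = ENNReal.ofReal (2 * Real.log (b / a)) := by
  have hb : 0 < b := lt_of_lt_of_le ha hab
  have hc : ContinuousOn (fun t : ℝ => 2 / t) (Icc a b) :=
    continuousOn_const.div continuousOn_id (fun x hx => ne_of_gt (lt_of_lt_of_le ha hx.1))
  have hint : IntegrableOn (fun t : ℝ => 2 / t) (Ioc a b) volume :=
    (hc.integrableOn_Icc).mono_set Ioc_subset_Icc_self
  have hnn : 0 ≤ᵐ[volume.restrict (Ioc a b)] (fun t : ℝ => 2 / t) := by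
    filter_upwards [ae_restrict_mem measurableSet_Ioc] with t ht
    have ht0 : 0 < t := lt_trans ha ht.1
    simp only [Pi.zero_apply]
    positivity
  rw [← ofReal_integral_eq_lintegral_ofReal hint hnn]
  congr 1
  rw [← intervalIntegral.integral_of_le hab]
  simp_rw [div_eq_mul_inv]
  rw [intervalIntegral.integral_const_mul, integral_inv_of_pos ha hb, div_eq_mul_inv]

lemma inner_bound {α0 : ℝ} (hα : 0 < α0) (u : ℝ≥0∞) :
    ∫⁻ t in Ioi (2 * α0), (if ENNReal.ofReal (t / 2) < u then ENNReal.ofReal (2 / t) * u else 0)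
      ≤ ENNReal.ofReal 2 * ENNReal.ofReal α0 * zygFnE (u / ENNReal.ofReal α0) := by
  have hαne : ENNReal.ofReal α0 ≠ 0 := (ENNReal.ofReal_pos.mpr hα).ne'
  rcases eq_or_ne u ∞ with hu | hu
  · have h1 : u / ENNReal.ofReal α0 = ∞ := by
      rw [hu]; exact ENNReal.top_div_of_ne_top ENNReal.ofReal_ne_top
    have h2 : zygFnE (u / ENNReal.ofReal α0) = ∞ := by
      rw [h1, zygFnE]
      rw [ENNReal.top_mul]
      intro hcon
      simp at hcon
    rw [h2, ENNReal.mul_top]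
    · exact le_top
    · exact mul_ne_zero (by simp) hαne
  rcases le_or_gt u (ENNReal.ofReal α0) with hcase | hcase
  · have h0 : ∫⁻ t in Ioi (2 * α0),
        (if ENNReal.ofReal (t / 2) < u then ENNReal.ofReal (2 / t) * u else 0) =
        ∫⁻ _ in Ioi (2 * α0), (0:ℝ≥0∞) := by
      apply setLIntegral_congr_fun measurableSet_Ioi (fun t ht => ?_)
      rw [if_neg]
      intro hcon
      have h2' : ENNReal.ofReal α0 ≤ ENNReal.ofReal (t / 2) :=
        ENNReal.ofReal_le_ofReal (by have : 2 * α0 < t := ht; linarith)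
      exact absurd (lt_of_lt_of_le (hcon.trans_le hcase) h2') (lt_irrefl _)
    rw [h0, lintegral_zero]; exact zero_le
  · -- main case
    set uR := u.toReal with huRdef
    have huR : α0 < uR := by
      rwa [← ENNReal.ofReal_lt_iff_lt_toReal hα.le hu]
    have huRpos : 0 < uR := hα.trans huR
    have step1 : ∫⁻ t in Ioi (2 * α0),
        (if ENNReal.ofReal (t / 2) < u then ENNReal.ofReal (2 / t) * u else 0) =
        ∫⁻ t in Ioi (2 * α0), (Iio (2 * uR)).indicator (fun t => ENNReal.ofReal (2 / t) * u) t := by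
      apply setLIntegral_congr_fun measurableSet_Ioi (fun t ht => ?_)
      have ht0 : 0 < t := lt_of_le_of_lt (by positivity) ht
      have hiff : ENNReal.ofReal (t / 2) < u ↔ t < 2 * uR := by
        rw [ENNReal.ofReal_lt_iff_lt_toReal (by positivity) hu, ← huRdef]
        constructor <;> intro <;> linarith
      by_cases hcond : t < 2 * uR
      · rw [if_pos (hiff.mpr hcond), Set.indicator_of_mem (mem_Iio.mpr hcond)]
      · rw [if_neg (fun hc => hcond (hiff.mp hc)), Set.indicator_of_notMem
          (fun hc => hcond (mem_Iio.mp hc))]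
    rw [step1, lintegral_indicator measurableSet_Iio,
      Measure.restrict_restrict measurableSet_Iio, Set.Iio_inter_Ioi,
      Measure.restrict_congr_set Ioo_ae_eq_Ioc,
      lintegral_mul_const' u _ hu, lint_two_div (by positivity) (by linarith)]
    have hdiv : (2 * uR) / (2 * α0) = uR / α0 := mul_div_mul_left uR α0 two_ne_zero
    rw [hdiv]
    -- now compare with RHS
    have htr : (u / ENNReal.ofReal α0).toReal = uR / α0 := by
      rw [ENNReal.toReal_div, ENNReal.toReal_ofReal hα.le]
    have hlogp : logPlus (uR / α0) = Real.log (uR / α0) :=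
      max_eq_left (Real.log_nonneg ((one_le_div hα).mpr huR.le))
    have hlognn : 0 ≤ Real.log (uR / α0) := Real.log_nonneg ((one_le_div hα).mpr huR.le)
    rw [zygFnE, htr, hlogp]
    calc ENNReal.ofReal (2 * Real.log (uR / α0)) * u
        = ENNReal.ofReal 2 * (u * ENNReal.ofReal (Real.log (uR / α0))) := by
          rw [ENNReal.ofReal_mul (by norm_num)]; ring
      _ ≤ ENNReal.ofReal 2 * (u * (1 + ENNReal.ofReal (Real.log (uR / α0)))) := by
          apply mul_le_mul_right
          exact mul_le_mul_right le_add_self _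
      _ = ENNReal.ofReal 2 * (ENNReal.ofReal α0 *
            (u / ENNReal.ofReal α0 * (1 + ENNReal.ofReal (Real.log (uR / α0))))) := by
          rw [← mul_assoc (ENNReal.ofReal α0), ENNReal.mul_div_cancel hαne ENNReal.ofReal_ne_top]
      _ = ENNReal.ofReal 2 * ENNReal.ofReal α0 *
            (u / ENNReal.ofReal α0 * (1 + ENNReal.ofReal (Real.log (uR / α0)))) := by
          rw [mul_assoc]

lemma stein_local {n : ℕ} (hn : 0 < n) {g : Rn n → ℝ≥0∞} (hg : Measurable g)
    {α0 : ℝ} (hα : 0 < α0) {K : ℝ≥0∞}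
    (hadm : ∫⁻ y, zygFnE (g y / ENNReal.ofReal α0) ≤ K)
    (Q : Set (Rn n)) (hQ : MeasurableSet Q) :
    ∫⁻ y in Q, Mrat g y ≤ ENNReal.ofReal (2 * α0) * volume Q +
      ENNReal.ofReal ((4 * Real.sqrt n) ^ n) *
        (ENNReal.ofReal 2 * ENNReal.ofReal α0 * K) := by
  set Cn := ENNReal.ofReal ((4 * Real.sqrt n) ^ n) with hCn
  set F : ℝ → Rn n → ℝ≥0∞ :=
    fun t y => if ENNReal.ofReal (t / 2) < g y then ENNReal.ofReal (2 / t) * g y else 0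
    with hFdef
  have hFmeas : Measurable (Function.uncurry F) := by
    apply Measurable.ite
    · exact measurableSet_lt
        ((measurable_fst.div_const 2).ennreal_ofReal) (hg.comp measurable_snd)
    · exact ((measurable_const.div measurable_fst).ennreal_ofReal).mul (hg.comp measurable_snd)
    · exact measurable_const
  -- pointwise weak-type bound for t > 2 α0
  have key : ∀ t : ℝ, t ∈ Ioi (2 * α0) →
      (volume.restrict Q) {y | ENNReal.ofReal t < Mrat g y} ≤ Cn * ∫⁻ y, F t y := by
    intro t ht
    have ht' : 2 * α0 < t := ht
    have ht0 : 0 < t := by linarith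
    have ht2 : 0 < t / 2 := by linarith
    set st : Set (Rn n) := {y | ENNReal.ofReal (t / 2) < g y} with hstdef
    have hst : MeasurableSet st := hg measurableSet_Ioi
    have hgp : Measurable (st.indicator g) := hg.indicator hst
    have hincl : {y | ENNReal.ofReal t < Mrat g y} ⊆
        {y | ENNReal.ofReal (t / 2) < maxE (st.indicator g) y} := by
      intro y hy
      by_contra hcon
      have h1 : maxE (st.indicator g) y ≤ ENNReal.ofReal (t / 2) := not_lt.mp hcon
      have h2 : Mrat g y ≤ ENNReal.ofReal (t / 2) + ENNReal.ofReal (t / 2) :=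
        (Mrat_split hg (ENNReal.ofReal (t / 2)) y).trans
          (add_le_add_left ((Mrat_le_maxE _ y).trans h1) _)
      rw [← ENNReal.ofReal_add ht2.le ht2.le] at h2
      have : t / 2 + t / 2 = t := by ring
      rw [this] at h2
      exact absurd (lt_of_lt_of_le hy h2) (lt_irrefl _)
    calc (volume.restrict Q) {y | ENNReal.ofReal t < Mrat g y}
        ≤ (volume.restrict Q) {y | ENNReal.ofReal (t / 2) < maxE (st.indicator g) y} :=
          measure_mono hincl
      _ ≤ volume {y | ENNReal.ofReal (t / 2) < maxE (st.indicator g) y} :=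
          Measure.restrict_le_self _
      _ ≤ Cn * (ENNReal.ofReal (t / 2))⁻¹ * ∫⁻ y, st.indicator g y :=
          weak_type_maxE hn hgp ht2
      _ = Cn * ∫⁻ y, F t y := by
          rw [mul_assoc]
          congr 1
          rw [← ENNReal.ofReal_inv_of_pos ht2, inv_div,
            ← lintegral_const_mul' _ _ ENNReal.ofReal_ne_top]
          apply lintegral_congr
          intro y
          by_cases hy : y ∈ st
          · have hy' : ENNReal.ofReal (t / 2) < g y := hy
            rw [Set.indicator_of_mem hy]
            exact (if_pos hy').symm
          · have hy' : ¬ ENNReal.ofReal (t / 2) < g y := hy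
            rw [Set.indicator_of_notMem hy, mul_zero]
            exact (if_neg hy').symm
  -- layer cake
  have hSF : SFinite (volume.restrict Q : Measure (Rn n)) := inferInstance
  rw [layercake_ennreal (volume.restrict Q) (measurable_Mrat g)]
  rw [← Set.Ioc_union_Ioi_eq_Ioi (by positivity : (0:ℝ) ≤ 2 * α0),
    lintegral_union measurableSet_Ioi Set.Ioc_disjoint_Ioi_same]
  apply add_le_add
  · -- small t piece
    calc ∫⁻ t in Ioc 0 (2 * α0), (volume.restrict Q) {y | ENNReal.ofReal t < Mrat g y}
        ≤ ∫⁻ _ in Ioc 0 (2 * α0), volume Q := by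
          apply lintegral_mono
          intro t
          calc (volume.restrict Q) {y | ENNReal.ofReal t < Mrat g y}
              ≤ (volume.restrict Q) univ := measure_mono (subset_univ _)
            _ = volume Q := by rw [Measure.restrict_apply_univ]
      _ = volume Q * volume (Ioc 0 (2 * α0)) := setLIntegral_const _ _
      _ = ENNReal.ofReal (2 * α0) * volume Q := by
          rw [Real.volume_Ioc, sub_zero, mul_comm]
  · -- large t piece
    calc ∫⁻ t in Ioi (2 * α0), (volume.restrict Q) {y | ENNReal.ofReal t < Mrat g y}
        ≤ ∫⁻ t in Ioi (2 * α0), Cn * ∫⁻ y, F t y :=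
          setLIntegral_mono_ae (measurable_const.mul hFmeas.lintegral_prod_right).aemeasurable (ae_of_all _ key)
      _ = Cn * ∫⁻ t in Ioi (2 * α0), (∫⁻ y, F t y) :=
          (lintegral_const_mul' _ _ ENNReal.ofReal_ne_top)
      _ = Cn * ∫⁻ y, (∫⁻ t in Ioi (2 * α0), F t y) := by
          congr 1
          exact lintegral_lintegral_swap hFmeas.aemeasurable
      _ ≤ Cn * ∫⁻ y, ENNReal.ofReal 2 * ENNReal.ofReal α0 *
            zygFnE (g y / ENNReal.ofReal α0) := by
          apply mul_le_mul_right
          apply lintegral_mono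
          intro y
          exact inner_bound hα (g y)
      _ = Cn * (ENNReal.ofReal 2 * ENNReal.ofReal α0 *
            ∫⁻ y, zygFnE (g y / ENNReal.ofReal α0)) := by
          congr 1
          exact lintegral_const_mul' _ _
            (ENNReal.mul_ne_top ENNReal.ofReal_ne_top ENNReal.ofReal_ne_top)
      _ ≤ Cn * (ENNReal.ofReal 2 * ENNReal.ofReal α0 * K) := by
          apply mul_le_mul_right
          exact mul_le_mul_right hadm _

lemma avg_le_zygAvgE {n : ℕ} (g : Rn n → ℝ≥0∞) (c' : Rn n) {h' : ℝ} (hh' : 0 < h') :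
    (ENNReal.ofReal (h' ^ n))⁻¹ * ∫⁻ y in zCube c' h', g y ≤ zygAvgE g c' h' := by
  apply le_sInf
  rintro a ⟨α, hα, rfl, hcond⟩
  have hαne : ENNReal.ofReal α ≠ 0 := (ENNReal.ofReal_pos.mpr hα).ne'
  have h1 : (ENNReal.ofReal (h' ^ n))⁻¹ *
      ∫⁻ y in zCube c' h', g y / ENNReal.ofReal α ≤ 1 := by
    refine le_trans (mul_le_mul_right (lintegral_mono fun y => ?_) _) hcond
    rw [zygFnE]
    exact le_mul_of_one_le_right (zero_le) (le_add_right le_rfl)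
  have h2 : ∫⁻ y in zCube c' h', g y / ENNReal.ofReal α =
      (∫⁻ y in zCube c' h', g y) * (ENNReal.ofReal α)⁻¹ := by
    simp_rw [div_eq_mul_inv]
    exact lintegral_mul_const' _ _ (ENNReal.inv_ne_top.mpr hαne)
  rw [h2, ← mul_assoc] at h1
  calc (ENNReal.ofReal (h' ^ n))⁻¹ * ∫⁻ y in zCube c' h', g y
      = (ENNReal.ofReal (h' ^ n))⁻¹ * (∫⁻ y in zCube c' h', g y) * (ENNReal.ofReal α)⁻¹ *
        ENNReal.ofReal α := by
        rw [mul_assoc, ENNReal.inv_mul_cancel hαne ENNReal.ofReal_ne_top, mul_one]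
    _ ≤ 1 * ENNReal.ofReal α := mul_le_mul_left h1 _
    _ = ENNReal.ofReal α := one_mul _


/-- There is `c > 0` such that for every locally integrable `f` and every
cube `Q`, `|Q|⁻¹ ∫_Q Mf ≤ c sup_{Q' ⊇ Q} ‖f‖_{L(1+log⁺L),Q'}`. -/
theorem stmt6 (n : ℕ) (hn : 0 < n) :
    ∃ c : ℝ, 0 < c ∧ ∀ f : Rn n → ℝ, MeasureTheory.LocallyIntegrable f volume →
      ∀ (ctr : Rn n) (h : ℝ), 0 < h →
      (ENNReal.ofReal (h ^ n))⁻¹ * ∫⁻ y in zCube ctr h, HLM f y ≤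
        ENNReal.ofReal c *
          ⨆ (ctr' : Rn n) (h' : ℝ) (_ : 0 < h') (_ : zCube ctr h ⊆ zCube ctr' h'),
            zygAvg f ctr' h' := by
  have hsqrt : (0:ℝ) < Real.sqrt n := Real.sqrt_pos.mpr (Nat.cast_pos.mpr hn)
  set C2 : ℝ := 2 + 2 * 3 ^ n * (4 * Real.sqrt n) ^ n with hC2def
  have hC2 : 0 < C2 := by positivity
  refine ⟨2 ^ n * C2 + 3 ^ n, by positivity, ?_⟩
  intro f hf ctr h hh
  set S := ⨆ (ctr' : Rn n) (h' : ℝ) (_ : 0 < h') (_ : zCube ctr h ⊆ zCube ctr' h'),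
      zygAvg f ctr' h' with hSdef
  set g' : Rn n → ℝ≥0∞ := fun y => ENNReal.ofReal |f y| with hg'def
  -- measurable representative
  have habs : AEMeasurable (fun y => |f y|) volume :=
    (continuous_abs.measurable).comp_aemeasurable hf.aestronglyMeasurable.aemeasurable
  have hg'ae : AEMeasurable g' volume := habs.ennreal_ofReal
  set G : Rn n → ℝ≥0∞ := hg'ae.mk g' with hGdef
  have hGmeas : Measurable G := hg'ae.measurable_mk
  have hGae : g' =ᵐ[volume] G := hg'ae.ae_eq_mk
  have hcube_int : ∀ (c0 : Rn n) (s : ℝ), (∫⁻ y in zCube c0 s, g' y) =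
      ∫⁻ y in zCube c0 s, G y := fun c0 s =>
    lintegral_congr_ae (ae_restrict_of_ae hGae)
  have hmaxE_eq : ∀ x, HLM f x = maxE G x := by
    intro x
    show maxE g' x = maxE G x
    simp only [maxE]
    exact iSup_congr fun c0 => iSup_congr fun s => iSup_congr fun _ => iSup_congr fun _ => by
      rw [hcube_int]
  set Q := zCube ctr h with hQdef
  set Q3 := zCube ctr (3 * h) with hQ3def
  have hQsubQ3 : Q ⊆ Q3 := by
    intro x hx i
    have := hx i
    calc |x i - ctr i| ≤ h / 2 := this
      _ ≤ 3 * h / 2 := by linarith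
  have hQ3S : zygAvg f ctr (3 * h) ≤ S := by
    rw [hSdef]
    exact le_iSup_of_le ctr (le_iSup_of_le (3 * h) (le_iSup_of_le (by linarith)
      (le_iSup_of_le hQsubQ3 le_rfl)))
  set g : Rn n → ℝ≥0∞ := Q3.indicator G with hgdef
  have hgmeas : Measurable g := hGmeas.indicator (measurableSet_zCube _ _)
  -- pointwise estimate on Q
  have hpt : ∀ y ∈ Q, maxE G y ≤
      ENNReal.ofReal (2 ^ n) * Mrat g y + ENNReal.ofReal (3 ^ n) * S := by
    intro y hy
    apply iSup_le; intro c0; apply iSup_le; intro s; apply iSup_le; intro hs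
    apply iSup_le; intro hyR
    rcases le_or_gt s h with hsh | hsh
    · -- near case : R ⊆ Q3
      have hsub : zCube c0 s ⊆ Q3 := by
        intro z hz i
        have h1 := hz i
        have h2 : |c0 i - y i| ≤ s / 2 := by rw [abs_sub_comm]; exact hyR i
        have h3 := hy i
        calc |z i - ctr i| = |(z i - c0 i) + (c0 i - y i) + (y i - ctr i)| := by ring_nf
          _ ≤ |(z i - c0 i) + (c0 i - y i)| + |y i - ctr i| := abs_add_le _ _
          _ ≤ |z i - c0 i| + |c0 i - y i| + |y i - ctr i| :=
              add_le_add_left (abs_add_le _ _) _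
          _ ≤ s / 2 + s / 2 + h / 2 := by
              apply add_le_add (add_le_add h1 h2) h3
          _ ≤ 3 * h / 2 := by linarith
      have hint : (∫⁻ z in zCube c0 s, G z) = ∫⁻ z in zCube c0 s, g z :=
        setLIntegral_congr_fun (measurableSet_zCube _ _)
          (fun z hz => (Set.indicator_of_mem (hsub hz) G).symm)
      calc (ENNReal.ofReal (s ^ n))⁻¹ * ∫⁻ z in zCube c0 s, G z
          = (ENNReal.ofReal (s ^ n))⁻¹ * ∫⁻ z in zCube c0 s, g z := by rw [hint]
        _ ≤ maxE g y := le_iSup_of_le c0 (le_iSup_of_le s (le_iSup_of_le hs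
            (le_iSup_of_le hyR le_rfl)))
        _ ≤ ENNReal.ofReal (2 ^ n) * Mrat g y := maxE_le_Mrat g y
        _ ≤ _ := le_add_right le_rfl
    · -- far case
      set q := 2 * s + h with hqdef
      have hq1 : s < q := by rw [hqdef]; linarith
      have hq2 : q ≤ 3 * s := by rw [hqdef]; linarith
      have hsub : zCube c0 s ⊆ zCube ctr q := by
        intro z hz i
        have h1 := hz i
        have h2 : |c0 i - y i| ≤ s / 2 := by rw [abs_sub_comm]; exact hyR i
        have h3 := hy i
        calc |z i - ctr i| = |(z i - c0 i) + (c0 i - y i) + (y i - ctr i)| := by ring_nf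
          _ ≤ |(z i - c0 i) + (c0 i - y i)| + |y i - ctr i| := abs_add_le _ _
          _ ≤ |z i - c0 i| + |c0 i - y i| + |y i - ctr i| :=
              add_le_add_left (abs_add_le _ _) _
          _ ≤ s / 2 + s / 2 + h / 2 := by
              apply add_le_add (add_le_add h1 h2) h3
          _ ≤ q / 2 := by rw [hqdef]; linarith
      have hQsub : Q ⊆ zCube ctr q := by
        intro x hx i
        calc |x i - ctr i| ≤ h / 2 := hx i
          _ ≤ q / 2 := by rw [hqdef]; linarith
      have havg : (ENNReal.ofReal (q ^ n))⁻¹ * ∫⁻ z in zCube ctr q, G z ≤ S := by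
        rw [← hcube_int]
        calc (ENNReal.ofReal (q ^ n))⁻¹ * ∫⁻ z in zCube ctr q, g' z
            ≤ zygAvgE g' ctr q := avg_le_zygAvgE g' ctr (by rw [hqdef]; linarith)
          _ ≤ S := by
              rw [hSdef]
              exact le_iSup_of_le ctr (le_iSup_of_le q (le_iSup_of_le
                (by rw [hqdef]; linarith) (le_iSup_of_le hQsub le_rfl)))
      calc (ENNReal.ofReal (s ^ n))⁻¹ * ∫⁻ z in zCube c0 s, G z
          ≤ (ENNReal.ofReal (s ^ n))⁻¹ * ∫⁻ z in zCube ctr q, G z :=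
            mul_le_mul_right (lintegral_mono_set hsub) _
        _ ≤ (ENNReal.ofReal (3 ^ n) * (ENNReal.ofReal (q ^ n))⁻¹) *
              ∫⁻ z in zCube ctr q, G z :=
            mul_le_mul_left (inv_pow_le_aux hs hq1 hq2 (by norm_num) n) _
        _ = ENNReal.ofReal (3 ^ n) * ((ENNReal.ofReal (q ^ n))⁻¹ *
              ∫⁻ z in zCube ctr q, G z) := mul_assoc _ _ _
        _ ≤ ENNReal.ofReal (3 ^ n) * S := mul_le_mul_right havg _
        _ ≤ _ := le_add_left le_rfl
  -- Stein part
  have hQmeas : MeasurableSet Q := measurableSet_zCube _ _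
  set D : ℝ≥0∞ := ENNReal.ofReal C2 * ENNReal.ofReal (h ^ n) with hDdef
  have hD0 : D ≠ 0 := mul_ne_zero (ENNReal.ofReal_pos.mpr hC2).ne'
    (ENNReal.ofReal_pos.mpr (by positivity)).ne'
  have hDtop : D ≠ ∞ := ENNReal.mul_ne_top ENNReal.ofReal_ne_top ENNReal.ofReal_ne_top
  have h3hn : (0:ℝ) < (3 * h) ^ n := by positivity
  have hkey : ∀ α : ℝ, 0 < α →
      (ENNReal.ofReal ((3 * h) ^ n))⁻¹ *
        (∫⁻ y in zCube ctr (3 * h), zygFnE (g' y / ENNReal.ofReal α)) ≤ 1 →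
      (∫⁻ y in Q, Mrat g y) ≤ D * ENNReal.ofReal α := by
    intro α hα hcond
    have htot : ∫⁻ y, zygFnE (g y / ENNReal.ofReal α) ≤ ENNReal.ofReal ((3 * h) ^ n) := by
      have e1 : (fun y => zygFnE (g y / ENNReal.ofReal α)) =
          Q3.indicator (fun y => zygFnE (G y / ENNReal.ofReal α)) := by
        funext y
        by_cases hy : y ∈ Q3
        · rw [Set.indicator_of_mem hy, hgdef, Set.indicator_of_mem hy]
        · rw [Set.indicator_of_notMem hy, hgdef, Set.indicator_of_notMem hy]
          show zygFnE ((0:ℝ≥0∞) / ENNReal.ofReal α) = 0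
          rw [ENNReal.zero_div, zygFnE, zero_mul]
      have e2 : ∫⁻ y in Q3, zygFnE (G y / ENNReal.ofReal α) =
          ∫⁻ y in Q3, zygFnE (g' y / ENNReal.ofReal α) :=
        lintegral_congr_ae (ae_restrict_of_ae (hGae.mono fun y hy => by
          simp only [← hy]))
      rw [e1, lintegral_indicator (measurableSet_zCube _ _), e2]
      have hne : ENNReal.ofReal ((3 * h) ^ n) ≠ 0 := (ENNReal.ofReal_pos.mpr h3hn).ne'
      calc ∫⁻ y in Q3, zygFnE (g' y / ENNReal.ofReal α)
          = ENNReal.ofReal ((3 * h) ^ n) * ((ENNReal.ofReal ((3 * h) ^ n))⁻¹ *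
            ∫⁻ y in Q3, zygFnE (g' y / ENNReal.ofReal α)) := by
            rw [← mul_assoc, ENNReal.mul_inv_cancel hne ENNReal.ofReal_ne_top, one_mul]
        _ ≤ ENNReal.ofReal ((3 * h) ^ n) * 1 := mul_le_mul_right hcond _
        _ = ENNReal.ofReal ((3 * h) ^ n) := mul_one _
    have hst := stein_local hn hgmeas hα htot Q hQmeas
    rw [hQdef, volume_zCube ctr hh.le] at hst
    calc ∫⁻ y in Q, Mrat g y
        ≤ ENNReal.ofReal (2 * α) * ENNReal.ofReal (h ^ n) +
          ENNReal.ofReal ((4 * Real.sqrt n) ^ n) *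
            (ENNReal.ofReal 2 * ENNReal.ofReal α * ENNReal.ofReal ((3 * h) ^ n)) := hst
      _ = ENNReal.ofReal ((2 * α) * h ^ n +
            (4 * Real.sqrt n) ^ n * (2 * α * (3 * h) ^ n)) := by
          rw [← ENNReal.ofReal_mul (by positivity), ← ENNReal.ofReal_mul (by positivity),
            ← ENNReal.ofReal_mul (by positivity), ← ENNReal.ofReal_mul (by positivity),
            ← ENNReal.ofReal_add (by positivity) (by positivity)]
      _ = ENNReal.ofReal (C2 * h ^ n * α) := by
          congr 1
          rw [hC2def, mul_pow 3 h]
          ring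
      _ = D * ENNReal.ofReal α := by
          rw [hDdef, ← ENNReal.ofReal_mul (by positivity),
            ← ENNReal.ofReal_mul (by positivity)]
  have hdivle : (∫⁻ y in Q, Mrat g y) / D ≤ zygAvg f ctr (3 * h) := by
    apply le_sInf
    rintro a ⟨α, hα, rfl, hcond⟩
    rw [ENNReal.div_le_iff_le_mul (Or.inl hD0) (Or.inl hDtop), mul_comm]
    exact hkey α hα hcond
  have hT0 : (∫⁻ y in Q, Mrat g y) ≤ D * zygAvg f ctr (3 * h) := by
    calc (∫⁻ y in Q, Mrat g y) = D * ((∫⁻ y in Q, Mrat g y) / D) :=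
          (ENNReal.mul_div_cancel hD0 hDtop).symm
      _ ≤ D * zygAvg f ctr (3 * h) := mul_le_mul_right hdivle _
  -- final chain
  have hMain : (∫⁻ y in Q, HLM f y) ≤
      ENNReal.ofReal ((2 ^ n * C2 + 3 ^ n) * h ^ n) * S := by
    calc (∫⁻ y in Q, HLM f y) = ∫⁻ y in Q, maxE G y :=
          lintegral_congr fun y => hmaxE_eq y
      _ ≤ ∫⁻ y in Q, (ENNReal.ofReal (2 ^ n) * Mrat g y + ENNReal.ofReal (3 ^ n) * S) :=
          setLIntegral_mono_ae
            (((measurable_Mrat g).const_mul _).add measurable_const).aemeasurable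
            (ae_of_all _ hpt)
      _ = ENNReal.ofReal (2 ^ n) * (∫⁻ y in Q, Mrat g y) +
            (ENNReal.ofReal (3 ^ n) * S) * volume Q := by
          rw [lintegral_add_right' _ aemeasurable_const, setLIntegral_const,
            lintegral_const_mul' _ _ ENNReal.ofReal_ne_top]
      _ ≤ ENNReal.ofReal (2 ^ n) * (D * zygAvg f ctr (3 * h)) +
            (ENNReal.ofReal (3 ^ n) * S) * ENNReal.ofReal (h ^ n) := by
          rw [hQdef, volume_zCube ctr hh.le]
          exact add_le_add (mul_le_mul_right hT0 _) le_rfl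
      _ ≤ ENNReal.ofReal (2 ^ n) * (D * S) +
            (ENNReal.ofReal (3 ^ n) * S) * ENNReal.ofReal (h ^ n) :=
          add_le_add (mul_le_mul_right (mul_le_mul_right hQ3S _) _) le_rfl
      _ = ENNReal.ofReal ((2 ^ n * C2 + 3 ^ n) * h ^ n) * S := by
          have c1 : ENNReal.ofReal ((2 ^ n * C2 + 3 ^ n) * h ^ n) =
              ENNReal.ofReal (2 ^ n) * ENNReal.ofReal C2 * ENNReal.ofReal (h ^ n) +
                ENNReal.ofReal (3 ^ n) * ENNReal.ofReal (h ^ n) := by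
            rw [add_mul, ENNReal.ofReal_add (by positivity) (by positivity),
              ENNReal.ofReal_mul (by positivity), ENNReal.ofReal_mul (by positivity),
              ENNReal.ofReal_mul (by positivity)]
          rw [c1, hDdef]
          ring
  have hhn0 : ENNReal.ofReal (h ^ n) ≠ 0 := (ENNReal.ofReal_pos.mpr (by positivity)).ne'
  calc (ENNReal.ofReal (h ^ n))⁻¹ * ∫⁻ y in zCube ctr h, HLM f y
      ≤ (ENNReal.ofReal (h ^ n))⁻¹ *
        (ENNReal.ofReal ((2 ^ n * C2 + 3 ^ n) * h ^ n) * S) := mul_le_mul_right hMain _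
    _ = ENNReal.ofReal (2 ^ n * C2 + 3 ^ n) * S *
        ((ENNReal.ofReal (h ^ n))⁻¹ * ENNReal.ofReal (h ^ n)) := by
        rw [ENNReal.ofReal_mul (by positivity)]
        ring
    _ = ENNReal.ofReal (2 ^ n * C2 + 3 ^ n) * S := by
        rw [ENNReal.inv_mul_cancel hhn0 ENNReal.ofReal_ne_top, mul_one]


end
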